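/- Let T = (T(n,k))_{n,k≥0} be the array with entries in ℤ[c,d,e] defined by T(0,k) = δ_{k0} and, for n ≥ 1, T(n,k) = c·T(n−1,k−1) + (dk+e)·T(n−1,k), with T(n,k) = 0 for k < 0. Then T is coefficientwise totally positive: for every r ≥ 1 and all indices n_1 < ⋯ < n_r and k_1 < ⋯ < k_r, the determinant det(T(n_i,k_j))_{1≤i,j≤r} is a polynomial in c,d,e with nonnegative integer coefficients. -/

import Mathlib

/- The polynomial ring ℤ[c,d,e]: variable 0 ↦ c, 1 ↦ d, 2 ↦ e. -/
noncomputable def cVar : MvPolynomial (Fin 3) ℤ := MvPolynomial.X 0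
noncomputable def dVar : MvPolynomial (Fin 3) ℤ := MvPolynomial.X 1
noncomputable def eVar : MvPolynomial (Fin 3) ℤ := MvPolynomial.X 2

/-- The array `T(n,k)` with entries in ℤ[c,d,e], defined by `T(0,k) = δ_{k0}` and
`T(n,k) = c·T(n−1,k−1) + (dk+e)·T(n−1,k)` for `n ≥ 1`.  The second index ranges
over ℤ, so the convention `T(n,k) = 0` for `k < 0` is automatic. -/
noncomputable def T : ℕ → ℤ → MvPolynomial (Fin 3) ℤ
  | 0, k => if k = 0 then 1 else 0
  | n + 1, k =>
      cVar * T n (k - 1) + (dVar * ((k : ℤ) : MvPolynomial (Fin 3) ℤ) + eVar) * T n k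

section Aux

open Finset Equiv Matrix MvPolynomial

/-- Coefficientwise nonnegativity. -/
def Nng (p : MvPolynomial (Fin 3) ℤ) : Prop := ∀ m, 0 ≤ p.coeff m

lemma Nng.zero : Nng 0 := fun m => by simp
lemma Nng.one : Nng 1 := fun m => by simp [MvPolynomial.coeff_one]; split <;> simp
lemma Nng.add {p q} (hp : Nng p) (hq : Nng q) : Nng (p + q) := fun m => by
  rw [MvPolynomial.coeff_add]; exact add_nonneg (hp m) (hq m)
lemma Nng.mul {p q} (hp : Nng p) (hq : Nng q) : Nng (p * q) := fun m => by
  classical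
  rw [MvPolynomial.coeff_mul]
  exact Finset.sum_nonneg fun x _ => mul_nonneg (hp _) (hq _)
lemma Nng.sum {X : Type*} (s : Finset X) (f : X → MvPolynomial (Fin 3) ℤ)
    (h : ∀ x ∈ s, Nng (f x)) : Nng (∑ x ∈ s, f x) := fun m => by
  rw [MvPolynomial.coeff_sum]
  exact Finset.sum_nonneg fun x hx => h x hx m
lemma Nng.X (i : Fin 3) : Nng (MvPolynomial.X i) := fun m => by
  classical
  rw [MvPolynomial.coeff_X']
  split <;> simp
lemma Nng.intCast {k : ℤ} (hk : 0 ≤ k) : Nng ((k : MvPolynomial (Fin 3) ℤ)) := fun m => by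
  classical
  rw [← map_intCast (MvPolynomial.C : ℤ →+* MvPolynomial (Fin 3) ℤ), MvPolynomial.coeff_C]
  split <;> simp [hk]

open scoped Classical in
/-- Cauchy–Binet formula. -/
theorem cauchyBinet {R : Type*} [CommRing R] {r N : ℕ}
    (A : Matrix (Fin r) (Fin N) R) (B : Matrix (Fin N) (Fin r) R) :
    (A * B).det = ∑ f ∈ Finset.univ.filter (fun f : Fin r → Fin N => StrictMono f),
      (A.submatrix id f).det * (B.submatrix f id).det := by
  have step1 : (A * B).det
      = ∑ p : Fin r → Fin N, (∏ i, B (p i) i) * (A.submatrix id p).det := by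
    calc (A * B).det = ∑ σ : Perm (Fin r), Equiv.Perm.sign σ •
          ∏ i, ∑ k, A (σ i) k * B k i := by
          simp [Matrix.det_apply, Matrix.mul_apply]
      _ = ∑ σ : Perm (Fin r), ∑ p : Fin r → Fin N, Equiv.Perm.sign σ •
          ∏ i, (A (σ i) (p i) * B (p i) i) := by
          simp only [Finset.prod_univ_sum, Fintype.piFinset_univ, Finset.smul_sum]
      _ = ∑ p : Fin r → Fin N, ∑ σ : Perm (Fin r), Equiv.Perm.sign σ •
          ∏ i, (A (σ i) (p i) * B (p i) i) := Finset.sum_comm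
      _ = ∑ p : Fin r → Fin N, (∏ i, B (p i) i) * (A.submatrix id p).det := by
          refine Finset.sum_congr rfl fun p _ => ?_
          rw [Matrix.det_apply, Finset.mul_sum]
          refine Finset.sum_congr rfl fun σ _ => ?_
          rw [Finset.prod_mul_distrib]
          simp only [Matrix.submatrix_apply, id_eq, Units.smul_def, zsmul_eq_mul]
          ring
  rw [step1]
  rw [← Finset.sum_filter_add_sum_filter_not Finset.univ (fun p => Function.Injective p)]
  have hnon : ∑ p ∈ Finset.univ.filter
      (fun p : Fin r → Fin N => ¬ Function.Injective p),
      (∏ i, B (p i) i) * (A.submatrix id p).det = 0 := by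
    refine Finset.sum_eq_zero fun p hp => ?_
    have hp' : ¬ Function.Injective p := (Finset.mem_filter.mp hp).2
    simp only [Function.Injective] at hp'
    push_neg at hp'
    obtain ⟨i, j, hij, hne⟩ := hp'
    rw [Matrix.det_zero_of_column_eq hne (fun k => by simp [hij]), mul_zero]
  rw [hnon, add_zero]
  rw [show (Finset.univ.filter (fun f : Fin r → Fin N => StrictMono f)).sum
        (fun f => (A.submatrix id f).det * (B.submatrix f id).det)
      = ∑ x ∈ (Finset.univ.filter (fun f : Fin r → Fin N => StrictMono f)) ×ˢ
          (Finset.univ : Finset (Perm (Fin r))),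
          (∏ i, B (x.1 (x.2 i)) i) * (A.submatrix id (x.1 ∘ x.2)).det from ?_]
  · -- the bijection (f, σ) ↦ f ∘ σ
    refine (Finset.sum_bij (fun x _ => x.1 ∘ x.2) ?_ ?_ ?_ ?_).symm
    · rintro ⟨f, σ⟩ hx
      simp only [Finset.mem_product, Finset.mem_filter, Finset.mem_univ, true_and] at hx ⊢
      exact hx.1.injective.comp σ.injective
    · rintro ⟨f, σ⟩ hx ⟨f', σ'⟩ hx' h
      simp only [Finset.mem_product, Finset.mem_filter, Finset.mem_univ, true_and,
        and_true] at hx hx'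
      simp only at h
      have himg : ∀ (g : Fin r → Fin N) (τ : Perm (Fin r)),
          Finset.univ.image (g ∘ τ) = Finset.univ.image g := by
        intro g τ
        ext x
        simp only [Finset.mem_image, Finset.mem_univ, true_and, Function.comp_apply]
        exact ⟨fun ⟨i, hi⟩ => ⟨τ i, hi⟩, fun ⟨j, hj⟩ => ⟨τ.symm j, by simpa using hj⟩⟩
      have himg2 : Finset.univ.image f = Finset.univ.image f' := by
        rw [← himg f σ, ← himg f' σ', h]
      have hcard : (Finset.univ.image f).card = r := by
        rw [Finset.card_image_of_injective _ hx.injective, Finset.card_univ, Fintype.card_fin]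
      have hf1 : f = (Finset.univ.image f).orderEmbOfFin hcard :=
        Finset.orderEmbOfFin_unique hcard (fun x => Finset.mem_image_of_mem f (mem_univ x)) hx
      have hf2 : f' = (Finset.univ.image f).orderEmbOfFin hcard :=
        Finset.orderEmbOfFin_unique hcard
          (fun x => himg2 ▸ Finset.mem_image_of_mem f' (mem_univ x)) hx'
      have hff : f = f' := hf1.trans hf2.symm
      subst hff
      have hσ : σ = σ' := by
        ext i
        exact congrArg Fin.val (hx.injective (congrFun h i))
      rw [hσ]
    · intro p hp
      simp only [Finset.mem_filter, Finset.mem_univ, true_and] at hp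
      set t : Finset (Fin N) := Finset.univ.image p with ht
      have hcard : t.card = r := by
        rw [ht, Finset.card_image_of_injective _ hp, Finset.card_univ, Fintype.card_fin]
      set f : Fin r → Fin N := ⇑(t.orderEmbOfFin hcard) with hfdef
      have hmem : ∀ i, p i ∈ t := fun i => Finset.mem_image_of_mem p (mem_univ i)
      set σ0 : Fin r → Fin r := fun i => (t.orderIsoOfFin hcard).symm ⟨p i, hmem i⟩ with hσ0
      have hσ0inj : Function.Injective σ0 := by
        intro i j hij
        have := (t.orderIsoOfFin hcard).symm.injective.eq_iff.mp hij
        exact hp (Subtype.ext_iff.mp this)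
      have hbij := Finite.injective_iff_bijective.mp hσ0inj
      refine ⟨(f, Equiv.ofBijective σ0 hbij), ?_, ?_⟩
      · simp only [Finset.mem_product, Finset.mem_filter, Finset.mem_univ, true_and, and_true]
        exact (t.orderEmbOfFin hcard).strictMono
      · funext i
        show f (σ0 i) = p i
        rw [hfdef, hσ0]
        rw [← Finset.coe_orderIsoOfFin_apply]
        rw [OrderIso.apply_symm_apply]
    · rintro ⟨f, σ⟩ _
      rfl
  · -- sum over product
    rw [Finset.sum_product]
    refine Finset.sum_congr rfl fun f hf => ?_
    simp only [Finset.mem_filter, Finset.mem_univ, true_and] at hf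
    have hsub : ∀ σ : Perm (Fin r), (A.submatrix id (f ∘ σ)).det
        = Equiv.Perm.sign σ * (A.submatrix id f).det := fun σ => by
      rw [show A.submatrix id (f ∘ σ) = (A.submatrix id f).submatrix id σ from rfl]
      exact Matrix.det_permute' σ _
    symm
    show (∑ σ : Perm (Fin r), (∏ i, B (f (σ i)) i) * (A.submatrix id (f ∘ σ)).det) = _
    calc ∑ σ : Perm (Fin r), (∏ i, B (f (σ i)) i) * (A.submatrix id (f ∘ σ)).det
        = (A.submatrix id f).det *
          ∑ σ : Perm (Fin r), Equiv.Perm.sign σ • ∏ i, (B.submatrix f id) (σ i) i := by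
          rw [Finset.mul_sum]
          refine Finset.sum_congr rfl fun σ _ => ?_
          rw [hsub σ]
          simp only [Matrix.submatrix_apply, id_eq, Units.smul_def, zsmul_eq_mul]
          ring
      _ = (A.submatrix id f).det * (B.submatrix f id).det := by rw [← Matrix.det_apply]

/-- The production matrix entries. -/
noncomputable def Pm (j k : ℤ) : MvPolynomial (Fin 3) ℤ :=
  if k = j + 1 then cVar
  else if k = j then dVar * ((k : ℤ) : MvPolynomial (Fin 3) ℤ) + eVar
  else 0

lemma Pm_nng {j : ℤ} (hj : 0 ≤ j) (k : ℤ) : Nng (Pm j k) := by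
  rw [Pm]
  split
  · exact Nng.X 0
  · split
    · rename_i h1 h2
      subst h2
      exact Nng.add (Nng.mul (Nng.X 1) (Nng.intCast hj)) (Nng.X 2)
    · exact Nng.zero

lemma T_neg : ∀ (n : ℕ) (k : ℤ), k < 0 → T n k = 0 := by
  intro n
  induction n with
  | zero => intro k hk; simp [T]; omega
  | succ n ih =>
      intro k hk
      show cVar * T n (k - 1) + (dVar * ((k : ℤ) : MvPolynomial (Fin 3) ℤ) + eVar) * T n k = 0
      rw [ih (k - 1) (by omega), ih k hk, mul_zero, mul_zero, add_zero]

lemma sum_T_P (n : ℕ) (lo : ℤ) (N : ℕ) (k : ℤ) (h1 : lo ≤ k - 1) (h2 : k ≤ lo + N - 1) :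
    ∑ m : Fin N, T n (lo + m) * Pm (lo + m) k = T (n + 1) k := by
  have hN : 1 ≤ N := by omega
  have hm1 : (k - 1 - lo).toNat < N := by omega
  have hm2 : (k - lo).toNat < N := by omega
  set m1 : Fin N := ⟨(k - 1 - lo).toNat, hm1⟩
  set m2 : Fin N := ⟨(k - lo).toNat, hm2⟩
  have hne : m1 ≠ m2 := by
    simp only [m1, m2, Fin.ne_iff_vne]
    omega
  have hv1 : lo + (m1 : ℤ) = k - 1 := by simp [m1]; omega
  have hv2 : lo + (m2 : ℤ) = k := by simp [m2]; omega
  have hsub : ∑ m : Fin N, T n (lo + m) * Pm (lo + m) k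
      = ∑ m ∈ ({m1, m2} : Finset (Fin N)), T n (lo + m) * Pm (lo + m) k := by
    refine (Finset.sum_subset (Finset.subset_univ _) ?_).symm
    intro m _ hm
    simp only [Finset.mem_insert, Finset.mem_singleton] at hm
    push_neg at hm
    have : Pm (lo + m) k = 0 := by
      rw [Pm, if_neg, if_neg]
      · intro h; exact hm.2 (by simp only [m2, Fin.ext_iff]; omega)
      · intro h; exact hm.1 (by simp only [m1, Fin.ext_iff]; omega)
    rw [this, mul_zero]
  rw [hsub, Finset.sum_pair hne, hv1, hv2]
  have e1 : Pm (k - 1) k = cVar := by rw [Pm, if_pos (by ring)]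
  have e2 : Pm k k = dVar * ((k : ℤ) : MvPolynomial (Fin 3) ℤ) + eVar := by
    rw [Pm, if_neg (by omega), if_pos rfl]
  rw [e1, e2]
  show _ = cVar * T n (k - 1) + (dVar * ((k : ℤ) : MvPolynomial (Fin 3) ℤ) + eVar) * T n k
  ring

/-- Minors of the bidiagonal production matrix are coefficientwise nonnegative. -/
lemma Pm_minor : ∀ (s : ℕ) (u v : Fin s → ℤ), StrictMono u → StrictMono v →
    (∀ i, 0 ≤ u i) → Nng (Matrix.det (Matrix.of fun i j => Pm (u i) (v j))) := by
  intro s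
  induction s with
  | zero =>
      intro u v _ _ _
      rw [Matrix.det_fin_zero]
      exact Nng.one
  | succ s ih =>
      intro u v hu hv hpos
      by_cases hv0 : v 0 < u 0
      · have hzero : ∀ i, (Matrix.of fun i j => Pm (u i) (v j)) i 0 = 0 := by
          intro i
          show Pm (u i) (v 0) = 0
          have hui : u 0 ≤ u i := hu.monotone (Fin.zero_le i)
          rw [Pm, if_neg (by omega), if_neg (by omega)]
        rw [Matrix.det_eq_zero_of_column_eq_zero 0 hzero]
        exact Nng.zero
      · push_neg at hv0
        rw [Matrix.det_succ_row_zero, Finset.sum_eq_single 0]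
        · simp only [Fin.val_zero, pow_zero, one_mul, Matrix.of_apply, Fin.succAbove_zero]
          apply Nng.mul
          · exact Pm_nng (hpos 0) (v 0)
          · exact ih (fun i => u i.succ) (fun j => v j.succ)
              (fun a b h => hu (Fin.succ_lt_succ_iff.mpr h))
              (fun a b h => hv (Fin.succ_lt_succ_iff.mpr h))
              (fun i => hpos i.succ)
        · intro j _ hj
          have hjpos : (0 : Fin (s + 1)) < j := Fin.pos_of_ne_zero hj
          by_cases hvj : v j = u 0 + 1
          · have hjval : 0 < (j : ℕ) := hjpos
            have hs : 0 < s := by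
              have := j.isLt
              omega
            have hv00 : v 0 = u 0 := by
              have h2 : v 0 < v j := hv hjpos
              omega
            have hzero : ∀ i : Fin s,
                ((Matrix.of fun i j => Pm (u i) (v j)).submatrix Fin.succ j.succAbove)
                  i ⟨0, hs⟩ = 0 := by
              intro i
              show Pm (u (Fin.succ i)) (v (j.succAbove ⟨0, hs⟩)) = 0
              have hcol0 : j.succAbove ⟨0, hs⟩ = 0 := by
                rw [Fin.succAbove_of_castSucc_lt j ⟨0, hs⟩ (by
                  rw [Fin.lt_def]
                  simpa using hjval)]
                rfl
              rw [hcol0, hv00]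
              have husucc : u 0 < u (Fin.succ i) := hu (by
                rw [Fin.lt_def]
                simp)
              rw [Pm, if_neg (by omega), if_neg (by omega)]
            rw [Matrix.det_eq_zero_of_column_eq_zero _ hzero, mul_zero]
          · have hentry : Matrix.of (fun i j => Pm (u i) (v j)) 0 j = 0 := by
              show Pm (u 0) (v j) = 0
              have h2 : v 0 < v j := hv hjpos
              rw [Pm, if_neg hvj, if_neg (by omega)]
            rw [hentry, mul_zero, zero_mul]
        · intro h
          exact absurd (Finset.mem_univ 0) h

/-- Key induction: every minor of `T` (with integer column indices) is
coefficientwise nonnegative. -/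
lemma key : ∀ (N : ℕ) (r : ℕ) (row : Fin r → ℕ) (col : Fin r → ℤ),
    (∑ i, row i) + r ≤ N → StrictMono row → StrictMono col →
    Nng (Matrix.det (Matrix.of fun i j => T (row i) (col j))) := by
  intro N
  induction N using Nat.strong_induction_on with
  | _ N IH =>
    intro r row col hN hrow hcol
    match r with
    | 0 =>
        rw [Matrix.det_fin_zero]
        exact Nng.one
    | s + 1 =>
      by_cases h0 : row 0 = 0
      · by_cases hc0 : col 0 = 0
        · -- expand along row 0
          rw [Matrix.det_succ_row_zero, Finset.sum_eq_single 0]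
          · simp only [Fin.val_zero, pow_zero, one_mul, Matrix.of_apply, Fin.succAbove_zero]
            have hT00 : T (row 0) (col 0) = 1 := by rw [h0, hc0]; simp [T]
            rw [hT00, one_mul]
            have hsum : (∑ i : Fin s, row i.succ) + s < N := by
              have : (∑ i : Fin (s + 1), row i) = row 0 + ∑ i : Fin s, row i.succ :=
                Fin.sum_univ_succ row
              omega
            exact IH ((∑ i : Fin s, row i.succ) + s) hsum s (fun i => row i.succ)
              (fun j => col j.succ) le_rfl
              (fun a b h => hrow (Fin.succ_lt_succ_iff.mpr h))
              (fun a b h => hcol (Fin.succ_lt_succ_iff.mpr h))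
          · intro j _ hj
            have hentry : Matrix.of (fun i j => T (row i) (col j)) 0 j = 0 := by
              show T (row 0) (col j) = 0
              have : col 0 < col j := hcol (Fin.pos_of_ne_zero hj)
              rw [h0]
              show (if col j = 0 then (1 : MvPolynomial (Fin 3) ℤ) else 0) = 0
              rw [if_neg (by omega)]
            rw [hentry, mul_zero, zero_mul]
          · intro h
            exact absurd (Finset.mem_univ 0) h
        · rcases lt_or_gt_of_ne hc0 with hlt | hgt
          · have hzero : ∀ i, Matrix.of (fun i j => T (row i) (col j)) i 0 = 0 := by
              intro i
              show T (row i) (col 0) = 0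
              exact T_neg (row i) (col 0) hlt
            rw [Matrix.det_eq_zero_of_column_eq_zero 0 hzero]
            exact Nng.zero
          · have hzero : ∀ j, Matrix.of (fun i j => T (row i) (col j)) 0 j = 0 := by
              intro j
              show T (row 0) (col j) = 0
              have : col 0 ≤ col j := hcol.monotone (Fin.zero_le j)
              rw [h0]
              show (if col j = 0 then (1 : MvPolynomial (Fin 3) ℤ) else 0) = 0
              rw [if_neg (by omega)]
            rw [Matrix.det_eq_zero_of_row_eq_zero 0 hzero]
            exact Nng.zero
      · -- all rows ≥ 1: factor through the production matrix
        have hpos : ∀ i, 1 ≤ row i := fun i => by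
          have := hrow.monotone (Fin.zero_le i)
          omega
        set lo : ℤ := col 0 - 1 with hlo
        have hlast : lo < col (Fin.last s) := by
          have := hcol.monotone (Fin.le_last 0)
          omega
        set NN : ℕ := (col (Fin.last s) - lo).toNat + 1 with hNN
        set A : Matrix (Fin (s + 1)) (Fin NN) (MvPolynomial (Fin 3) ℤ) :=
          Matrix.of (fun i m => T (row i - 1) (lo + (m : ℤ))) with hA
        set B : Matrix (Fin NN) (Fin (s + 1)) (MvPolynomial (Fin 3) ℤ) :=
          Matrix.of (fun m j => Pm (lo + (m : ℤ)) (col j)) with hB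
        have hAB : Matrix.of (fun i j => T (row i) (col j)) = A * B := by
          apply Matrix.ext
          intro i j
          rw [Matrix.mul_apply]
          show T (row i) (col j) = ∑ m : Fin NN, T (row i - 1) (lo + (m : ℤ)) *
            Pm (lo + (m : ℤ)) (col j)
          rw [sum_T_P (row i - 1) lo NN (col j) ?_ ?_]
          · congr 1
            have := hpos i
            omega
          · have := hcol.monotone (Fin.zero_le j)
            omega
          · have := hcol.monotone (Fin.le_last j)
            omega
        rw [hAB, cauchyBinet]
        apply Nng.sum
        intro f hf
        classical
        simp only [Finset.mem_filter, Finset.mem_univ, true_and] at hf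
        by_cases hneg : lo + ((f 0 : ℕ) : ℤ) < 0
        · have hzero : ∀ i, (A.submatrix id f) i 0 = 0 := by
            intro i
            show T (row i - 1) (lo + ((f 0 : ℕ) : ℤ)) = 0
            exact T_neg _ _ hneg
          rw [Matrix.det_eq_zero_of_column_eq_zero 0 hzero, zero_mul]
          exact Nng.zero
        · push_neg at hneg
          apply Nng.mul
          · -- the A-minor, via the induction hypothesis
            have h1 : (∑ i : Fin (s + 1), (row i - 1)) + (s + 1)
                = ∑ i : Fin (s + 1), row i := by
              calc (∑ i : Fin (s + 1), (row i - 1)) + (s + 1)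
                  = ∑ i : Fin (s + 1), ((row i - 1) + 1) := by
                    rw [Finset.sum_add_distrib]
                    simp
                _ = ∑ i : Fin (s + 1), row i :=
                    Finset.sum_congr rfl fun i _ => by have := hpos i; omega
            have hsum : (∑ i : Fin (s + 1), (row i - 1)) + (s + 1) < N := by omega
            exact IH _ hsum (s + 1) (fun i => row i - 1) (fun j => lo + ((f j : ℕ) : ℤ))
              le_rfl
              (fun a b h => by
                show row a - 1 < row b - 1
                have := hrow h
                have := hpos a
                omega)
              (fun a b h => by
                show lo + ((f a : ℕ) : ℤ) < lo + ((f b : ℕ) : ℤ)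
                have : (f a : ℕ) < (f b : ℕ) := hf h
                omega)
          · -- the B-minor, via Pm_minor
            exact Pm_minor (s + 1) (fun i => lo + ((f i : ℕ) : ℤ)) col
              (fun a b h => by
                show lo + ((f a : ℕ) : ℤ) < lo + ((f b : ℕ) : ℤ)
                have : (f a : ℕ) < (f b : ℕ) := hf h
                omega)
              hcol
              (fun i => by
                show (0 : ℤ) ≤ lo + ((f i : ℕ) : ℤ)
                have : (f 0 : ℕ) ≤ (f i : ℕ) := hf.monotone (Fin.zero_le i)
                omega)

end Aux

/-- The matrix `T` is coefficientwise totally positive: every minor, with rows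
`n₁ < ⋯ < n_r` and columns `k₁ < ⋯ < k_r`, is a polynomial in `c,d,e` with
nonnegative coefficients. -/
theorem T_coefficientwise_totally_positive
    (r : ℕ) (hr : 1 ≤ r) (row col : Fin r → ℕ)
    (hrow : StrictMono row) (hcol : StrictMono col) (m : Fin 3 →₀ ℕ) :
    0 ≤ (Matrix.det (Matrix.of fun i j : Fin r => T (row i) (col j))).coeff m := by
  exact key ((∑ i, row i) + r) r row (fun j => ((col j : ℕ) : ℤ)) le_rfl hrow
    (fun a b h => by
      show ((col a : ℕ) : ℤ) < ((col b : ℕ) : ℤ)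
      exact_mod_cast hcol h) m
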